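/- arXiv:1201.5186 — 3 statements merged into one kernel-verified Lean document; each statement's English description precedes it below -/
import Mathlib

section
/- Let p : ℂ → ℂ be a polynomial map of degree at least 2, let m ≥ 1 be an integer, and let K ⊆ ℂ be a nonempty compact set such that p^[m] maps K into K and ‖(p^[m])'(z)‖ > 1 for every z ∈ K. Then K is contained in the Julia set of p, i.e. in the topological frontier of the set of points whose forward orbit under p is bounded. -/
open Metric Set Filter Polynomial

/-- Iterates of polynomial evaluation are polynomial evaluation. -/
lemma iter_is_poly (p : Polynomial ℂ) (m : ℕ) :
    ∃ q : Polynomial ℂ, (fun z => p.eval z)^[m] = fun z => q.eval z := by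
  induction m with
  | zero => exact ⟨Polynomial.X, by funext z; simp⟩
  | succ n ih =>
    obtain ⟨q, hq⟩ := ih
    refine ⟨p.comp q, ?_⟩
    funext z
    rw [Function.iterate_succ_apply', hq]
    simp [Polynomial.eval_comp]

/-- escape radius: for big z, p multiplies norm by at least 2. -/
lemma escape_radius (p : Polynomial ℂ) (hp : 2 ≤ p.natDegree) :
    ∃ R : ℝ, 0 < R ∧ ∀ z : ℂ, R ≤ ‖z‖ → 2 * ‖z‖ ≤ ‖p.eval z‖ := by
  have hdvx : 0 < p.divX.degree := by
    have h1 : 1 ≤ p.divX.natDegree := by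
      rw [Polynomial.natDegree_divX_eq_natDegree_tsub_one]; omega
    have : p.divX ≠ 0 := fun h => by simp [h] at h1
    rw [Polynomial.degree_eq_natDegree this]
    exact_mod_cast h1
  -- ‖divX.eval z‖ → ∞ along comap norm atTop
  have htd : Tendsto (fun z : ℂ => ‖p.divX.eval z‖) (comap norm atTop) atTop :=
    Polynomial.tendsto_norm_atTop p.divX hdvx tendsto_comap
  have hev : ∀ᶠ z : ℂ in comap norm atTop,
      3 ≤ ‖p.divX.eval z‖ := htd.eventually_ge_atTop 3
  rw [eventually_comap] at hev
  rw [eventually_atTop] at hev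
  obtain ⟨R₀, hR₀⟩ := hev
  refine ⟨max R₀ (max 1 ‖p.coeff 0‖), by positivity, fun z hz => ?_⟩
  have h3 : 3 ≤ ‖p.divX.eval z‖ := hR₀ ‖z‖ (le_trans (le_max_left _ _) hz) z rfl
  have hc0 : ‖p.coeff 0‖ ≤ ‖z‖ := le_trans (le_trans (le_max_right _ _) (le_max_right _ _)) hz
  have hpz : p.eval z = z * p.divX.eval z + p.coeff 0 := by
    conv_lhs => rw [← p.X_mul_divX_add]
    simp only [Polynomial.eval_add, Polynomial.eval_mul, Polynomial.eval_X, Polynomial.eval_C]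
  have h1 : ‖z * p.divX.eval z‖ ≤ ‖p.eval z‖ + ‖(p.coeff 0 : ℂ)‖ := by
    rw [hpz]
    simpa using norm_add_le (z * p.divX.eval z + (p.coeff 0 : ℂ)) (-(p.coeff 0 : ℂ))
  have h2 : ‖z * p.divX.eval z‖ = ‖z‖ * ‖p.divX.eval z‖ := norm_mul _ _
  nlinarith [norm_nonneg z, norm_nonneg (p.eval z), mul_le_mul_of_nonneg_left h3 (norm_nonneg z)]

/-- The filled Julia set is forward invariant / points of it stay in it. -/
lemma mem_S_iterate (p : Polynomial ℂ) (z : ℂ) (j : ℕ)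
    (hz : Bornology.IsBounded (Set.range fun n : ℕ => (fun w => p.eval w)^[n] z)) :
    Bornology.IsBounded (Set.range fun n : ℕ => (fun w => p.eval w)^[n]
      ((fun w => p.eval w)^[j] z)) := by
  apply hz.subset
  rintro _ ⟨n, rfl⟩
  refine ⟨n + j, ?_⟩
  show (fun w => p.eval w)^[n + j] z = (fun w => p.eval w)^[n] ((fun w => p.eval w)^[j] z)
  rw [Function.iterate_add_apply]

/-- chain rule for iterates. -/
lemma deriv_iterate (g : ℂ → ℂ) (hg : Differentiable ℂ g) (n : ℕ) (z : ℂ) :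
    deriv (g^[n]) z = ∏ i ∈ Finset.range n, deriv g (g^[i] z) := by
  induction n generalizing z with
  | zero => simp
  | succ k ih =>
    rw [Function.iterate_succ', Finset.prod_range_succ]
    have : deriv (g ∘ g^[k]) z = deriv g (g^[k] z) * deriv (g^[k]) z :=
      deriv_comp z (hg _) (hg.iterate k _)
    rw [this, ih, mul_comm]

theorem stmt4 (p : Polynomial ℂ) (hp : 2 ≤ p.natDegree) (m : ℕ) (hm : 1 ≤ m)
    (K : Set ℂ) (hKne : K.Nonempty) (hKc : IsCompact K)
    (hinv : Set.MapsTo ((fun z => p.eval z)^[m]) K K)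
    (hexp : ∀ z ∈ K, 1 < ‖deriv ((fun z => p.eval z)^[m]) z‖) :
    K ⊆ frontier {z : ℂ |
      Bornology.IsBounded (Set.range fun n : ℕ => (fun z => p.eval z)^[n] z)} := by
  set f : ℂ → ℂ := fun z => p.eval z with hf
  have hfd : Differentiable ℂ f := p.differentiable
  set g : ℂ → ℂ := f^[m] with hgdef
  have hgd : Differentiable ℂ g := hfd.iterate m
  set S : Set ℂ := {z : ℂ | Bornology.IsBounded (Set.range fun n : ℕ => f^[n] z)} with hS
  -- Step 1: S is bounded
  obtain ⟨R, hRpos, hR⟩ := escape_radius p hp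
  have hSsub : S ⊆ closedBall 0 R := by
    intro z hz
    simp only [mem_closedBall, dist_zero_right]
    by_contra hzR
    push_neg at hzR
    have key : ∀ n : ℕ, 2 ^ n * ‖z‖ ≤ ‖f^[n] z‖ := by
      intro n
      induction n with
      | zero => simp
      | succ k ih =>
        have hk : R ≤ ‖f^[k] z‖ := by
          calc R ≤ ‖z‖ := hzR.le
          _ ≤ 2 ^ k * ‖z‖ := le_mul_of_one_le_left (norm_nonneg z) (one_le_pow₀ one_le_two)
          _ ≤ ‖f^[k] z‖ := ih
        rw [Function.iterate_succ_apply']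
        calc 2 ^ (k + 1) * ‖z‖ = 2 * (2 ^ k * ‖z‖) := by ring
        _ ≤ 2 * ‖f^[k] z‖ := by linarith
        _ ≤ ‖f (f^[k] z)‖ := hR _ hk
    have hb : Bornology.IsBounded (Set.range fun n : ℕ => f^[n] z) := hz
    obtain ⟨C, hC⟩ := hb.exists_norm_le
    have hzpos : 0 < ‖z‖ := hRpos.trans hzR
    obtain ⟨n, hn⟩ := pow_unbounded_of_one_lt (C / ‖z‖) (one_lt_two (α := ℝ))
    have h1 : ‖f^[n] z‖ ≤ C := hC _ ⟨n, rfl⟩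
    have h2 := key n
    rw [div_lt_iff₀ hzpos] at hn
    linarith
  -- Step 2: K ⊆ S
  have hKS : K ⊆ S := by
    intro z hz
    have horb : ∀ n : ℕ, f^[n] z ∈ ⋃ s ∈ Finset.range m, f^[s] '' K := by
      intro n
      have h1 : (g^[n / m]) z ∈ K := hinv.iterate (n / m) hz
      have h2 : f^[n] z = f^[n % m] (g^[n / m] z) := by
        rw [hgdef, ← Function.iterate_mul, ← Function.iterate_add_apply]
        congr 1
        exact (Nat.mod_add_div n m).symm
      rw [h2]
      exact Set.mem_biUnion (Finset.mem_range.2 (Nat.mod_lt n hm)) ⟨_, h1, rfl⟩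
    have hbd : Bornology.IsBounded (⋃ s ∈ Finset.range m, f^[s] '' K) := by
      apply (Bornology.isBounded_biUnion (Finset.finite_toSet _)).2
      intro s _
      exact (hKc.image ((hfd.continuous).iterate s)).isBounded
    exact hbd.subset (Set.range_subset_iff.2 horb)
  -- Step 3: K ∩ interior S = ∅
  have hKint : ∀ z ∈ K, z ∉ interior S := by
    -- minimum expansion factor
    obtain ⟨z₀, hz₀K, hz₀min⟩ := hKc.exists_isMinOn hKne (f := fun z => ‖deriv g z‖) (by
      obtain ⟨q, hq⟩ := iter_is_poly p m
      have : deriv g = fun z => q.derivative.eval z := by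
        rw [hgdef, hq]; funext z; simp [Polynomial.deriv]
      rw [this]
      exact (q.derivative.continuous.norm).continuousOn)
    set lam : ℝ := ‖deriv g z₀‖ with hlam
    have hlam1 : 1 < lam := hexp z₀ hz₀K
    intro z hzK hzint
    obtain ⟨r, hrpos, hball⟩ := Metric.isOpen_iff.1 isOpen_interior z hzint
    have hballS : ball z r ⊆ S := hball.trans interior_subset
    -- each iterate g^[n] maps ball z r into ball (g^[n] z) (2R+1)
    have hmaps : ∀ n : ℕ, Set.MapsTo (g^[n]) (ball z r) (ball (g^[n] z) (2 * R + 1)) := by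
      intro n w hw
      have hwS : w ∈ S := hballS hw
      have hgw : ∀ w : ℂ, g^[n] w = f^[m * n] w := by
        intro w; rw [hgdef, ← Function.iterate_mul]
      have h1 : g^[n] w ∈ closedBall 0 R := by
        apply hSsub
        show Bornology.IsBounded (Set.range fun k : ℕ => f^[k] (g^[n] w))
        rw [hgw]
        exact mem_S_iterate p w (m * n) hwS
      have h2 : g^[n] z ∈ closedBall 0 R := by
        apply hSsub
        show Bornology.IsBounded (Set.range fun k : ℕ => f^[k] (g^[n] z))
        rw [hgw]
        exact mem_S_iterate p z (m * n) (hKS hzK)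
      simp only [mem_closedBall, dist_zero_right] at h1 h2
      rw [mem_ball]
      calc dist (g^[n] w) (g^[n] z) ≤ ‖g^[n] w‖ + ‖g^[n] z‖ := dist_le_norm_add_norm _ _
      _ ≤ 2 * R + 1 - 1 := by linarith
      _ < 2 * R + 1 := by linarith
    -- Schwarz / Cauchy estimate
    have hcauchy : ∀ n : ℕ, ‖deriv (g^[n]) z‖ ≤ (2 * R + 1) / r := fun n =>
      Complex.norm_deriv_le_div_of_mapsTo_ball
        ((hgd.iterate n).differentiableOn) ((hmaps n).mono_right Metric.ball_subset_closedBall) hrpos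
    -- lower bound via chain rule
    have hlow : ∀ n : ℕ, lam ^ n ≤ ‖deriv (g^[n]) z‖ := by
      intro n
      rw [deriv_iterate g hgd n z, norm_prod]
      have hln : lam ^ n = ∏ _i ∈ Finset.range n, lam := by simp
      rw [hln]
      exact Finset.prod_le_prod (fun i _ => by positivity)
        (fun i _ => hz₀min (hinv.iterate i hzK))
    obtain ⟨n, hn⟩ := pow_unbounded_of_one_lt ((2 * R + 1) / r) hlam1
    exact absurd ((hlow n).trans (hcauchy n)) (not_le.2 hn)
  intro z hz
  exact ⟨subset_closure (hKS hz), hKint z hz⟩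
end

section
/- Let α ∈ ℂ, let a, b ∈ ℂ with a ≠ 0, and let F be holomorphic on a neighborhood of α with F(z) = z + a(z−α)² + b(z−α)³ + O((z−α)⁴) as z → α. Set A = 1 − b/a², and define I(z) = −1/(a(z−α)), so that I⁻¹(w) = α − 1/(a·w). Then there exist R > 0 and C > 0 such that for every w ∈ ℂ with |w| ≥ R, the point I⁻¹(w) lies in the domain of F, F(I⁻¹(w)) ≠ α, and |I(F(I⁻¹(w))) − w − 1 − A/w| ≤ C/|w|². -/
set_option maxHeartbeats 2000000

private lemma key_alg (a b c w : ℂ) (ha : a ≠ 0) (hw : w ≠ 0)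
    (hD : (1 - 1 / w + (b / a ^ 2) / w ^ 2 - (c / a ^ 3) / w ^ 3 : ℂ) ≠ 0) :
    w / (1 - 1 / w + (b / a ^ 2) / w ^ 2 - (c / a ^ 3) / w ^ 3) - w - 1 - (1 - b / a ^ 2) / w
      = (((1 - b / a ^ 2) + c / a ^ 3 - b / a ^ 2) + (c / a ^ 3 - (1 - b / a ^ 2) * (b / a ^ 2)) / w
          + (1 - b / a ^ 2) * (c / a ^ 3) / w ^ 2)
        / ((1 - 1 / w + (b / a ^ 2) / w ^ 2 - (c / a ^ 3) / w ^ 3) * w ^ 2) := by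
  have hDW : ((1 - 1 / w + (b / a ^ 2) / w ^ 2 - (c / a ^ 3) / w ^ 3) * w ^ 2 : ℂ) ≠ 0 :=
    mul_ne_zero hD (pow_ne_zero 2 hw)
  linear_combination
    ((1 - 1 / w + (b / a ^ 2) / w ^ 2 - (c / a ^ 3) / w ^ 3)⁻¹ *
        (1 - (b / a ^ 2) / w + (c / a ^ 3) / w ^ 2)
      + (((1 - b / a ^ 2) + c / a ^ 3 - b / a ^ 2) + (c / a ^ 3 - (1 - b / a ^ 2) * (b / a ^ 2)) / w
          + (1 - b / a ^ 2) * (c / a ^ 3) / w ^ 2) *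
        ((1 - 1 / w + (b / a ^ 2) / w ^ 2 - (c / a ^ 3) / w ^ 3) * w ^ 2)⁻¹ * (w * w⁻¹ + 1)) *
      (mul_inv_cancel₀ hw)
    + (w + 1 + (1 - b / a ^ 2) / w
      + (((1 - b / a ^ 2) + c / a ^ 3 - b / a ^ 2) + (c / a ^ 3 - (1 - b / a ^ 2) * (b / a ^ 2)) / w
          + (1 - b / a ^ 2) * (c / a ^ 3) / w ^ 2) *
        ((1 - 1 / w + (b / a ^ 2) / w ^ 2 - (c / a ^ 3) / w ^ 3) * w ^ 2)⁻¹ * w ^ 2 * w⁻¹ ^ 2) *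
      (mul_inv_cancel₀ hD)
    + (-((((1 - b / a ^ 2) + c / a ^ 3 - b / a ^ 2) + (c / a ^ 3 - (1 - b / a ^ 2) * (b / a ^ 2)) / w
          + (1 - b / a ^ 2) * (c / a ^ 3) / w ^ 2) *
        (1 - 1 / w + (b / a ^ 2) / w ^ 2 - (c / a ^ 3) / w ^ 3)⁻¹ * w⁻¹ ^ 2)) *
      (mul_inv_cancel₀ hDW)

theorem stmt6 (α a b : ℂ) (ha : a ≠ 0) (U : Set ℂ) (hU : IsOpen U) (hα : α ∈ U)
    (F h : ℂ → ℂ) (hF : DifferentiableOn ℂ F U) (hh : DifferentiableOn ℂ h U)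
    (hexp : ∀ z ∈ U,
      F z = z + a * (z - α) ^ 2 + b * (z - α) ^ 3 + h z * (z - α) ^ 4) :
    ∃ R > (0 : ℝ), ∃ C > (0 : ℝ), ∀ w : ℂ, R ≤ ‖w‖ →
      α - 1 / (a * w) ∈ U ∧
      F (α - 1 / (a * w)) ≠ α ∧
      ‖-1 / (a * (F (α - 1 / (a * w)) - α)) - w - 1 - (1 - b / a ^ 2) / w‖
        ≤ C / ‖w‖ ^ 2 := by
  obtain ⟨r, hr0, hball⟩ := Metric.isOpen_iff.mp hU α hα
  have hsub : Metric.closedBall α (r/2) ⊆ U := fun z hz => hball (by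
    rw [Metric.mem_closedBall] at hz
    rw [Metric.mem_ball]
    linarith)
  obtain ⟨M, hM⟩ := (isCompact_closedBall α (r/2)).exists_bound_of_continuousOn
    (hh.continuousOn.mono hsub)
  have ha0 : (0:ℝ) < ‖a‖ := norm_pos_iff.mpr ha
  set M1 : ℝ := max M 0 / ‖a‖ ^ 3 with hM1def
  have hM1 : 0 ≤ M1 := by positivity
  set Babs : ℝ := ‖b / a ^ 2‖ with hBdef
  have hB0 : 0 ≤ Babs := norm_nonneg _
  set Aabs : ℝ := ‖1 - b / a ^ 2‖ with hAdef
  have hA0 : 0 ≤ Aabs := norm_nonneg _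
  set T : ℝ := 1 + Babs + M1 with hTdef
  have hT1 : (1:ℝ) ≤ T := by linarith
  set K : ℝ := (Aabs + M1 + Babs) + (M1 + Aabs * Babs) + Aabs * M1 with hKdef
  have hK0 : 0 ≤ K := by nlinarith
  refine ⟨max (max (2 / (‖a‖ * r)) 1) (2 * T), ?_, 2 * K + 1, by linarith, ?_⟩
  · exact lt_of_lt_of_le one_pos (le_trans (le_max_right _ 1) (le_max_left _ _))
  intro w hw
  set t : ℝ := ‖w‖ with htdef
  have ht1 : (1:ℝ) ≤ t := le_trans (le_trans (le_max_right _ 1) (le_max_left _ _)) hw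
  have ht2T : 2 * T ≤ t := le_trans (le_max_right _ _) hw
  have ht0 : (0:ℝ) < t := by linarith
  have hw0 : w ≠ 0 := by
    intro h0; rw [h0] at htdef; simp at htdef; linarith [htdef]
  have hur : 2 / (‖a‖ * r) ≤ t := le_trans (le_trans (le_max_left _ _) (le_max_left _ _)) hw
  -- the point z
  set z : ℂ := α - 1 / (a * w) with hzdef
  have hzα : z - α = -(1 / (a * w)) := by rw [hzdef]; ring
  have hzball : z ∈ Metric.closedBall α (r/2) := by
    rw [Metric.mem_closedBall, Complex.dist_eq, hzα]
    rw [norm_neg, norm_div, norm_one, norm_mul]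
    rw [div_le_iff₀ (by positivity)]
    rw [div_le_iff₀ (by positivity)] at hur
    nlinarith
  have hzU : z ∈ U := hsub hzball
  have hhz : ‖h z‖ ≤ max M 0 := le_trans (by simpa using hM z hzball) (le_max_left _ _)
  set H : ℂ := h z / a ^ 3 with hHdef
  have hHabs : ‖H‖ ≤ M1 := by
    rw [hHdef, norm_div, norm_pow, hM1def]
    exact div_le_div_of_nonneg_right hhz (by positivity) |>.trans_eq rfl
  set D : ℂ := 1 - 1 / w + (b / a ^ 2) / w ^ 2 - H / w ^ 3 with hDdef
  -- bound |D - 1| ≤ 1/2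
  have hT0 : (0:ℝ) < T := by linarith
  have hDsub : ‖D - 1‖ ≤ 1 / 2 := by
    have e : D - 1 = -(1 / w) + (b / a ^ 2) / w ^ 2 + -(H / w ^ 3) := by rw [hDdef]; ring
    calc ‖D - 1‖
        ≤ ‖-(1 / w) + (b / a ^ 2) / w ^ 2‖ + ‖-(H / w ^ 3)‖ := by
          rw [e]; exact norm_add_le _ _
      _ ≤ ‖-(1 / w)‖ + ‖(b / a ^ 2) / w ^ 2‖ + ‖-(H / w ^ 3)‖ := by
          exact add_le_add_left (norm_add_le _ _) _
      _ = 1 / t + Babs / t ^ 2 + ‖H‖ / t ^ 3 := by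
          simp only [norm_neg, norm_div, norm_one, norm_pow, htdef, hBdef]
      _ ≤ 1 / (2 * T) + Babs / (2 * T) + M1 / (2 * T) := by
          have ht2 : 2 * T ≤ t ^ 2 := by nlinarith
          have ht3 : 2 * T ≤ t ^ 3 := by nlinarith [sq_nonneg t, mul_nonneg (mul_nonneg ht0.le ht0.le) ht0.le]
          gcongr <;> first | positivity | linarith
      _ = 1 / 2 := by field_simp; ring
  have hDabs : (1:ℝ) / 2 ≤ ‖D‖ := by
    have h := norm_add_le (1 - D) D
    have h2 : ‖1 - D‖ = ‖D - 1‖ := norm_sub_rev 1 D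
    simp only [sub_add_cancel, norm_one] at h
    linarith
  have hD0 : D ≠ 0 := by
    intro h0; rw [h0] at hDabs; simp at hDabs; linarith
  -- F z - α = u * D
  have hu0 : -(1 / (a * w)) ≠ 0 := by
    simp [ha, hw0]
  have hFz : F z - α = -(1 / (a * w)) * D := by
    have e := hexp z hzU
    rw [hzα] at e
    rw [e, hDdef, hHdef]
    linear_combination hzα + (a⁻¹ * w⁻¹ ^ 2) * (mul_inv_cancel₀ ha)
  have hFne : F z ≠ α := by
    rw [← sub_ne_zero, hFz]
    exact mul_ne_zero hu0 hD0
  refine ⟨hzU, hFne, ?_⟩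
  -- key identity
  set A : ℂ := 1 - b / a ^ 2 with hAc
  set N : ℂ := (A + H - b / a ^ 2) + (H - A * (b / a ^ 2)) / w + A * H / w ^ 2 with hNdef
  have hne : a * (-(1 / (a * w)) * D) ≠ 0 := mul_ne_zero ha (mul_ne_zero hu0 hD0)
  have inv1 : -1 / (a * (F z - α)) = w / D := by
    rw [hFz, div_eq_div_iff hne hD0]
    linear_combination (D * w * w⁻¹) * (mul_inv_cancel₀ ha) + D * (mul_inv_cancel₀ hw0)
  have hD0' : (1 - 1 / w + (b / a ^ 2) / w ^ 2 - (h z / a ^ 3) / w ^ 3 : ℂ) ≠ 0 := by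
    rw [hDdef, hHdef] at hD0; exact hD0
  have key : w / D - w - 1 - (1 - b / a ^ 2) / w = N / (D * w ^ 2) := by
    rw [hNdef, hAc, hDdef, hHdef]
    exact key_alg a b (h z) w ha hw0 hD0'
  rw [inv1, key, norm_div, norm_mul, norm_pow]
  have hNabs : ‖N‖ ≤ K := by
    have c1 : ‖A + H - b / a ^ 2‖ ≤ Aabs + M1 + Babs := by
      calc ‖A + H - b / a ^ 2‖
          ≤ ‖A + H‖ + ‖b / a ^ 2‖ := norm_sub_le _ _
        _ ≤ ‖A‖ + ‖H‖ + ‖b / a ^ 2‖ :=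
            add_le_add_left (norm_add_le _ _) _
        _ ≤ Aabs + M1 + Babs := by rw [hAc, hBdef, hAdef]; linarith [hHabs]
    have c2 : ‖(H - A * (b / a ^ 2)) / w‖ ≤ M1 + Aabs * Babs := by
      rw [norm_div]
      refine le_trans (div_le_self (norm_nonneg _) ht1) ?_
      calc ‖H - A * (b / a ^ 2)‖
          ≤ ‖H‖ + ‖A * (b / a ^ 2)‖ := norm_sub_le _ _
        _ ≤ M1 + Aabs * Babs := by rw [norm_mul, hAc, hBdef, hAdef]; linarith [hHabs]
    have c3 : ‖A * H / w ^ 2‖ ≤ Aabs * M1 := by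
      rw [norm_div, norm_mul, norm_pow]
      refine le_trans (div_le_self (by positivity) (by nlinarith)) ?_
      rw [hAc, hAdef]
      exact mul_le_mul_of_nonneg_left hHabs hA0
    calc ‖N‖
        ≤ ‖(A + H - b / a ^ 2) + (H - A * (b / a ^ 2)) / w‖ + ‖A * H / w ^ 2‖ := by
          rw [hNdef]; exact norm_add_le _ _
      _ ≤ ‖A + H - b / a ^ 2‖ + ‖(H - A * (b / a ^ 2)) / w‖ + ‖A * H / w ^ 2‖ :=
          add_le_add_left (norm_add_le _ _) _
      _ ≤ K := by rw [hKdef]; linarith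
  rw [div_le_div_iff₀ (by positivity) (by positivity)]
  nlinarith [norm_nonneg N, sq_nonneg t, mul_le_mul_of_nonneg_right hDabs (le_of_lt (by positivity : (0:ℝ) < t ^ 2))]
end

section
/- Let τ ∈ ℂ with Im τ > 0, let R, M > 0 with 2M ≤ R·min(1, Im τ), and let Σ ⊆ ℂ be a set with |w| ≥ R for all w ∈ Σ. Suppose F : Σ → Σ and G : Σ → Σ satisfy |F(w) − w − 1| ≤ M/|w| and |G(w) − w − τ| ≤ M/|w| for all w ∈ Σ. Then for every nonempty compact set K ⊆ Σ there exists C ≥ 1 such that for all integers n ≥ 1, r ≥ 0 and all w ∈ K: C⁻¹·|r + n·τ| ≤ |F^[r](G^[n](w))| ≤ C·|r + n·τ|. -/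
open Finset

lemma tel_bound (N : ℕ) (s e : ℕ → ℝ) (h ρ δ Em : ℝ) (hh : 0 < h)
    (hδ : 0 ≤ δ) (hEm : 0 ≤ Em) (hρ : 0 ≤ ρ)
    (hs : ∀ k < N, s k + h ≤ s (k + 1))
    (hkey : ∀ k < N, e k ≤ δ ∨ (e k ≤ Em ∧ |s k| ≤ ρ)) :
    ∑ k ∈ Finset.range N, e k ≤ N * δ + (Em / h) * (2 * ρ + h) := by
  set g : ℝ → ℝ := fun x => max (-ρ) (min x (ρ + h)) with hg
  have hgmono : Monotone g := fun x y hxy => max_le_max le_rfl (min_le_min hxy le_rfl)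
  have hglb : ∀ x, -ρ ≤ g x := fun x => le_max_left _ _
  have hgub : ∀ x, g x ≤ ρ + h := fun x => max_le (by linarith) (min_le_right _ _)
  have step : ∀ k < N, e k ≤ δ + (Em / h) * (g (s (k + 1)) - g (s k)) := by
    intro k hk
    have hmono : g (s k) ≤ g (s (k + 1)) := hgmono (by have := hs k hk; linarith)
    rcases hkey k hk with h1 | ⟨h1, h2⟩
    · have : 0 ≤ (Em / h) * (g (s (k + 1)) - g (s k)) :=
        mul_nonneg (div_nonneg hEm hh.le) (by linarith)
      linarith
    · have habs := abs_le.mp h2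
      have hgk : g (s k) = s k := by
        show max (-ρ) (min (s k) (ρ + h)) = s k
        rw [min_eq_left (by linarith), max_eq_right (by linarith)]
      have hgk1 : s k + h ≤ g (s (k + 1)) := by
        have h3 := hs k hk
        have h4 : g (s k + h) = s k + h := by
          show max (-ρ) (min (s k + h) (ρ + h)) = s k + h
          rw [min_eq_left (by linarith), max_eq_right (by linarith)]
        calc s k + h = g (s k + h) := h4.symm
          _ ≤ g (s (k + 1)) := hgmono h3
      have hgain : h ≤ g (s (k + 1)) - g (s k) := by rw [hgk]; linarith
      have : Em ≤ (Em / h) * (g (s (k + 1)) - g (s k)) := by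
        rw [div_mul_eq_mul_div, le_div_iff₀ hh]
        nlinarith
      linarith
  calc ∑ k ∈ Finset.range N, e k
      ≤ ∑ k ∈ Finset.range N, (δ + (Em / h) * (g (s (k + 1)) - g (s k))) :=
        Finset.sum_le_sum (fun k hk => step k (Finset.mem_range.mp hk))
    _ = N * δ + (Em / h) * (g (s N) - g (s 0)) := by
        rw [Finset.sum_add_distrib, ← Finset.mul_sum, Finset.sum_range_sub (fun k => g (s k))]
        simp [mul_comm]
    _ ≤ N * δ + (Em / h) * (2 * ρ + h) := by
        have h1 : g (s N) - g (s 0) ≤ 2 * ρ + h := by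
          have := hglb (s 0); have := hgub (s N); linarith
        have : 0 ≤ Em / h := div_nonneg hEm hh.le
        nlinarith

open Finset

lemma phase_bound (S : Set ℂ) (R M : ℝ) (hR : 0 < R) (hM : 0 < M)
    (hS : ∀ w ∈ S, R ≤ ‖w‖)
    (H : ℂ → ℂ) (hHS : Set.MapsTo H S S) (d : ℂ) (a h : ℝ) (hh : 0 < h)
    (hH : ∀ w ∈ S, ‖H w - w - d‖ ≤ M / ‖w‖)
    (φ : ℂ → ℝ) (hφ1 : ∀ z, |φ z| ≤ ‖z‖)
    (hφ2 : ∀ z z', φ z + a - ‖z' - z - d‖ ≤ φ z')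
    (hah : M / R ≤ a - h)
    (δ : ℝ) (hδ : 0 < δ)
    (w : ℂ) (hw : w ∈ S) (N : ℕ) :
    ‖H^[N] w - w - (N : ℂ) * d‖ ≤
      N * δ + ((M / R) / h) * (2 * (M / δ) + h) := by
  have horb : ∀ k : ℕ, H^[k] w ∈ S := fun k => hHS.iterate k hw
  have horbR : ∀ k : ℕ, R ≤ ‖H^[k] w‖ := fun k => hS _ (horb k)
  have horbpos : ∀ k : ℕ, 0 < ‖H^[k] w‖ := fun k => lt_of_lt_of_le hR (horbR k)
  set e : ℕ → ℝ := fun k => M / ‖H^[k] w‖ with he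
  have heB : ∀ k, e k ≤ M / R := fun k =>
    div_le_div_of_nonneg_left hM.le hR (horbR k)
  have herr : ∀ k, ‖H^[k+1] w - H^[k] w - d‖ ≤ e k := by
    intro k
    rw [Function.iterate_succ_apply']
    exact hH _ (horb k)
  -- step 1 : distance to sum
  have hsum : ‖H^[N] w - w - (N : ℂ) * d‖ ≤ ∑ k ∈ Finset.range N, e k := by
    have htel : (∑ k ∈ Finset.range N, (H^[k+1] w - H^[k] w - d)) =
        H^[N] w - w - (N : ℂ) * d := by
      calc (∑ k ∈ Finset.range N, (H^[k+1] w - H^[k] w - d))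
          = ∑ k ∈ Finset.range N, ((H^[k+1] w - ((k+1 : ℕ) : ℂ) * d) - (H^[k] w - ((k : ℕ) : ℂ) * d)) := by
            apply Finset.sum_congr rfl
            intro k _
            push_cast
            ring
        _ = (H^[N] w - (N : ℂ) * d) - (H^[0] w - ((0 : ℕ) : ℂ) * d) :=
            Finset.sum_range_sub (fun k => H^[k] w - (k : ℂ) * d) N
        _ = H^[N] w - w - (N : ℂ) * d := by
            simp only [Function.iterate_zero_apply, Nat.cast_zero, zero_mul, sub_zero]
            ring
    calc ‖H^[N] w - w - (N : ℂ) * d‖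
        = ‖∑ k ∈ Finset.range N, (H^[k+1] w - H^[k] w - d)‖ := by rw [htel]
      _ ≤ ∑ k ∈ Finset.range N, ‖H^[k+1] w - H^[k] w - d‖ :=
          norm_sum_le _ _
      _ ≤ ∑ k ∈ Finset.range N, e k := Finset.sum_le_sum (fun k _ => herr k)
  refine hsum.trans ?_
  apply tel_bound N (fun k => φ (H^[k] w)) e h (M / δ) δ (M / R) hh hδ.le
    (div_nonneg hM.le hR.le) (div_nonneg hM.le hδ.le)
  · intro k _
    have h1 := hφ2 (H^[k] w) (H^[k+1] w)
    have h2 := herr k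
    have h3 := heB k
    show φ (H^[k] w) + h ≤ φ (H^[k+1] w)
    linarith
  · intro k _
    by_cases hcase : M / δ ≤ ‖H^[k] w‖
    · left
      rw [he]
      simp only
      rw [div_le_iff₀ (horbpos k)]
      calc M = δ * (M / δ) := by field_simp
        _ ≤ δ * ‖H^[k] w‖ := by nlinarith
    · right
      exact ⟨heB k, (hφ1 _).trans (le_of_not_ge hcase)⟩
set_option maxHeartbeats 1600000 in
theorem stmt7 (τ : ℂ) (hτ : 0 < τ.im) (R M : ℝ) (hR : 0 < R) (hM : 0 < M)
    (hRM : 2 * M ≤ R * min 1 τ.im) (S : Set ℂ) (hS : ∀ w ∈ S, R ≤ ‖w‖)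
    (F G : ℂ → ℂ) (hFS : Set.MapsTo F S S) (hGS : Set.MapsTo G S S)
    (hF : ∀ w ∈ S, ‖F w - w - 1‖ ≤ M / ‖w‖)
    (hG : ∀ w ∈ S, ‖G w - w - τ‖ ≤ M / ‖w‖) :
    ∀ K : Set ℂ, K ⊆ S → K.Nonempty → IsCompact K →
      ∃ C : ℝ, 1 ≤ C ∧ ∀ (n r : ℕ), 1 ≤ n → ∀ w ∈ K,
        C⁻¹ * ‖(r : ℂ) + (n : ℂ) * τ‖ ≤ ‖F^[r] (G^[n] w)‖ ∧
        ‖F^[r] (G^[n] w)‖ ≤ C * ‖(r : ℂ) + (n : ℂ) * τ‖ := by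
  intro K hKS hKne hKcomp
  -- bound on K
  obtain ⟨z₀, hz₀K, hz₀max'⟩ := hKcomp.exists_isMaxOn hKne continuous_norm.continuousOn
  have hz₀max : ∀ w ∈ K, ‖w‖ ≤ ‖z₀‖ := fun w hw => hz₀max' hw
  set B : ℝ := ‖z₀‖ with hB
  have hB0 : 0 ≤ B := norm_nonneg _
  -- basic estimate M / R ≤ min 1 τ.im / 2
  have hMR : M / R ≤ min 1 τ.im / 2 := by
    rw [div_le_div_iff₀ hR (by norm_num)]
    linarith
  have hmin1 : min 1 τ.im ≤ 1 := min_le_left _ _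
  have hminτ : min 1 τ.im ≤ τ.im := min_le_right _ _
  -- constants
  set T : ℝ := τ.im + 1 + ‖τ‖ with hT
  have hT0 : 0 < T := by have := norm_nonneg τ; rw [hT]; linarith
  set δ : ℝ := τ.im / (8 * T) with hδdef
  have hδ : 0 < δ := by positivity
  set AG : ℝ := ((M / R) / (τ.im / 2)) * (2 * (M / δ) + τ.im / 2) with hAG
  set AF : ℝ := ((M / R) / (1 / 2)) * (2 * (M / δ) + 1 / 2) with hAF
  have hAG0 : 0 < AG := by positivity
  have hAF0 : 0 < AF := by positivity
  set D : ℝ := B + (AG + AF) with hD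
  have hD0 : 0 < D := by rw [hD]; linarith
  set C : ℝ := max (2 + D / τ.im) (4 * D / R) with hC
  have hC2 : 2 + D / τ.im ≤ C := le_max_left _ _
  have hC4 : 4 * D / R ≤ C := le_max_right _ _
  have hCge2 : 2 ≤ C := by
    have h0 : 0 ≤ D / τ.im := by positivity
    linarith
  have hC0 : 0 < C := by linarith
  refine ⟨C, by linarith, ?_⟩
  intro n r hn w hw
  have hwS : w ∈ S := hKS hw
  have hwB : ‖w‖ ≤ B := hz₀max w hw
  have huS : G^[n] w ∈ S := hGS.iterate n hwS
  set u : ℂ := G^[n] w with hu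
  set z : ℂ := F^[r] u with hz
  have hzS : z ∈ S := hFS.iterate r huS
  have hzR : R ≤ ‖z‖ := hS z hzS
  set X : ℂ := (r : ℂ) + (n : ℂ) * τ with hX
  -- phase G
  have h1 : ‖G^[n] w - w - (n : ℂ) * τ‖ ≤ n * δ + AG := by
    refine phase_bound S R M hR hM hS G hGS τ τ.im (τ.im / 2) (by linarith) hG
      Complex.im Complex.abs_im_le_norm ?_ (by linarith) δ hδ w hwS n
    intro a b
    have h := Complex.abs_im_le_norm (b - a - τ)
    rw [abs_le] at h
    simp only [Complex.sub_im] at h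
    linarith [h.1]
  -- phase F
  have h2 : ‖F^[r] u - u - (r : ℂ) * 1‖ ≤ r * δ + AF := by
    refine phase_bound S R M hR hM hS F hFS 1 1 (1 / 2) (by norm_num) hF
      Complex.re Complex.abs_re_le_norm ?_ (by linarith) δ hδ u huS r
    intro a b
    have h := Complex.abs_re_le_norm (b - a - 1)
    rw [abs_le] at h
    simp only [Complex.sub_re, Complex.one_re] at h
    linarith [h.1]
  -- combine
  have hdist : ‖z - w - X‖ ≤ ((n : ℝ) + r) * δ + (AG + AF) := by
    have hsplit : z - w - X = (F^[r] u - u - (r : ℂ) * 1) + (G^[n] w - w - (n : ℂ) * τ) := by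
      rw [hz, hu, hX]; ring
    calc ‖z - w - X‖
        ≤ ‖F^[r] u - u - (r : ℂ) * 1‖ + ‖G^[n] w - w - (n : ℂ) * τ‖ := by
          rw [hsplit]; exact norm_add_le _ _
      _ ≤ ((n : ℝ) + r) * δ + (AG + AF) := by linarith
  -- |X| lower bounds
  have hXim : (n : ℝ) * τ.im ≤ ‖X‖ := by
    have h := Complex.abs_im_le_norm X
    have hXim' : X.im = (n : ℝ) * τ.im := by
      rw [hX]; simp [Complex.add_im, Complex.mul_im]
    rw [hXim'] at h
    exact le_trans (le_abs_self _) h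
  have hXτ : τ.im ≤ ‖X‖ := by
    have h1n : (1 : ℝ) ≤ (n : ℝ) := by exact_mod_cast hn
    nlinarith
  have hrle : (r : ℝ) ≤ ‖X‖ + (n : ℝ) * ‖τ‖ := by
    have : ((r : ℕ) : ℂ) = X - (n : ℂ) * τ := by rw [hX]; ring
    calc (r : ℝ) = ‖((r : ℕ) : ℂ)‖ := by rw [Complex.norm_natCast]
      _ = ‖X - (n : ℂ) * τ‖ := by rw [this]
      _ ≤ ‖X‖ + ‖(n : ℂ) * τ‖ := norm_sub_le _ _
      _ = ‖X‖ + (n : ℝ) * ‖τ‖ := by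
          rw [norm_mul, Complex.norm_natCast]
  -- key: ((n:ℝ) + r) * δ ≤ |X| / 8
  have hkey : ((n : ℝ) + r) * δ ≤ ‖X‖ / 8 := by
    have hXnn : 0 ≤ ‖X‖ := norm_nonneg _
    have hτabs : 0 ≤ ‖τ‖ := norm_nonneg _
    have hsum : ((n : ℝ) + r) * τ.im ≤ ‖X‖ * T := by
      have hn' : (n : ℝ) * ‖τ‖ * τ.im ≤ ‖X‖ * ‖τ‖ := by
        calc (n : ℝ) * ‖τ‖ * τ.im = ((n : ℝ) * τ.im) * ‖τ‖ := by ring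
          _ ≤ ‖X‖ * ‖τ‖ := mul_le_mul_of_nonneg_right hXim hτabs
      have hr' : (r : ℝ) * τ.im ≤ (‖X‖ + (n : ℝ) * ‖τ‖) * τ.im :=
        mul_le_mul_of_nonneg_right hrle hτ.le
      have hexp : (‖X‖ + (n : ℝ) * ‖τ‖) * τ.im
          = ‖X‖ * τ.im + (n : ℝ) * ‖τ‖ * τ.im := by ring
      have hTeq : ‖X‖ * T
          = ‖X‖ * τ.im + ‖X‖ + ‖X‖ * ‖τ‖ := by
        rw [hT]; ring
      rw [hTeq]
      rw [hexp] at hr'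
      have hgoal : ((n : ℝ) + r) * τ.im = (n : ℝ) * τ.im + (r : ℝ) * τ.im := by ring
      rw [hgoal]
      linarith
    have hδeq : ((n : ℝ) + r) * δ = ((n : ℝ) + r) * τ.im / (8 * T) := by
      rw [hδdef]; ring
    rw [hδeq, div_le_div_iff₀ (by positivity) (by norm_num : (0:ℝ) < 8)]
    linarith
  -- assemble
  have hXnn : 0 ≤ ‖X‖ := norm_nonneg _
  have hznn : 0 ≤ ‖z‖ := norm_nonneg _
  have hup : ‖z‖ ≤ ‖w‖ + ‖X‖ + ‖z - w - X‖ := by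
    have hzeq : z = (w + X) + (z - w - X) := by ring
    calc ‖z‖ = ‖(w + X) + (z - w - X)‖ := by rw [← hzeq]
      _ ≤ ‖w + X‖ + ‖z - w - X‖ := norm_add_le _ _
      _ ≤ ‖w‖ + ‖X‖ + ‖z - w - X‖ := by
          linarith [norm_add_le w X]
  have hlow : ‖X‖ ≤ ‖w‖ + ‖z‖ + ‖z - w - X‖ := by
    have hXeq : X = z - (z - w - X) - w := by ring
    calc ‖X‖ = ‖z - (z - w - X) - w‖ := by rw [← hXeq]
      _ ≤ ‖z - (z - w - X)‖ + ‖w‖ := norm_sub_le _ _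
      _ ≤ ‖z‖ + ‖z - w - X‖ + ‖w‖ := by
          linarith [norm_sub_le z (z - w - X)]
      _ = ‖w‖ + ‖z‖ + ‖z - w - X‖ := by ring
  have hddist : ‖z - w - X‖ ≤ ‖X‖ / 8 + (AG + AF) := by
    linarith
  have hDX : D ≤ (D / τ.im) * ‖X‖ := by
    have h1 : D = (D / τ.im) * τ.im := by field_simp
    have h2 : (D / τ.im) * τ.im ≤ (D / τ.im) * ‖X‖ :=
      mul_le_mul_of_nonneg_left hXτ (by positivity)
    linarith
  constructor
  · -- lower bound
    rw [inv_mul_le_iff₀ hC0]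
    by_cases hcase : ‖X‖ ≤ 4 * D
    · have h4 : 4 * D / R * R = 4 * D := by field_simp
      have h5 : 4 * D / R * R ≤ C * ‖z‖ := by
        apply mul_le_mul hC4 hzR hR.le hC0.le
      linarith
    · -- abs z ≥ (7/8)|X| - D ≥ |X|/2
      push_neg at hcase
      have h6 : (7 / 8) * ‖X‖ - D ≤ ‖z‖ := by
        have hDeq : D = B + (AG + AF) := hD
        linarith [hlow, hddist, hwB]
      have h7 : ‖X‖ ≤ 2 * ‖z‖ := by linarith
      have h9 : 2 * ‖z‖ ≤ C * ‖z‖ :=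
        mul_le_mul_of_nonneg_right hCge2 hznn
      linarith
  · -- upper bound
    have h8 : ‖z‖ ≤ (2 + D / τ.im) * ‖X‖ := by
      have h9 : ‖z‖ ≤ D + (9 / 8) * ‖X‖ := by
        have hDeq : D = B + (AG + AF) := hD
        linarith [hup, hddist, hwB]
      linarith [hDX]
    have h10 : (2 + D / τ.im) * ‖X‖ ≤ C * ‖X‖ :=
      mul_le_mul_of_nonneg_right hC2 hXnn
    linarith
end
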